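/- Let V be a finite set, let D ⊆ V × V be a finite set of arcs with no self-loops, let c : D → ℝ with c_e > 0 for all e, and let t : D → ℝ with t_e ≥ 0 for all e. Then there exists t' : D → ℝ with 0 ≤ t'_e ≤ t_e for every arc e, such that for every vertex v, Σ_{e ∈ D entering v} c_e t'_e − Σ_{e ∈ D leaving v} c_e t'_e = Σ_{e ∈ D entering v} c_e t_e − Σ_{e ∈ D leaving v} c_e t_e, and the support {e ∈ D : t'_e > 0} contains no directed cycle (no sequence of arcs e_1, …, e_m in the support with the head of e_i equal to the tail of e_{i+1}, indices modulo m). -/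

import Mathlib

open Finset

private def netFlow {V : Type*} [DecidableEq V] (D : Finset (V × V))
    (c t : V × V → ℝ) (v : V) : ℝ :=
  ∑ e ∈ D.filter (fun e => e.2 = v), c e * t e -
    ∑ e ∈ D.filter (fun e => e.1 = v), c e * t e

private def HasCyc {V : Type*} (D : Finset (V × V)) (t : V × V → ℝ) : Prop :=
  ∃ (m : ℕ) (es : Fin (m + 1) → V × V),
    (∀ i, es i ∈ D ∧ 0 < t (es i)) ∧
    (∀ i : Fin m, (es i.castSucc).2 = (es i.succ).1) ∧
    (es (Fin.last m)).2 = (es 0).1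

private lemma cyc_step {V : Type*} [DecidableEq V] (D : Finset (V × V))
    (c : V × V → ℝ) (hc : ∀ e ∈ D, 0 < c e)
    (t : V × V → ℝ) (ht : ∀ e ∈ D, 0 ≤ t e)
    (h : HasCyc D t) :
    ∃ t'' : V × V → ℝ,
      (∀ e ∈ D, 0 ≤ t'' e ∧ t'' e ≤ t e) ∧
      (∀ v, netFlow D c t'' v = netFlow D c t v) ∧
      (D.filter fun e => 0 < t'' e).card < (D.filter fun e => 0 < t e).card := by
  obtain ⟨m, es, hmem, hchain, hwrap⟩ := h
  have hNpos : 0 < m + 1 := Nat.succ_pos m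
  set f : ℕ → V × V := fun k => es ⟨k % (m + 1), Nat.mod_lt _ hNpos⟩ with hf
  have hfD : ∀ k, f k ∈ D := fun k => (hmem _).1
  have hft : ∀ k, 0 < t (f k) := fun k => (hmem _).2
  have hfmod : ∀ k, f (k % (m + 1)) = f k := by
    intro k
    show es _ = es _
    congr 1
    exact Fin.ext (Nat.mod_mod_of_dvd _ dvd_rfl)
  have hstep : ∀ k, (f k).2 = (f (k + 1)).1 := by
    intro k
    have e1 : (k + 1) % (m + 1) = (k % (m + 1) + 1) % (m + 1) := by
      conv_lhs => rw [← Nat.mod_add_div k (m + 1)]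
      rw [Nat.add_right_comm, Nat.add_mul_mod_self_left]
    rcases Nat.lt_or_ge (k % (m + 1)) m with hlt | hge
    · have h1 : (k + 1) % (m + 1) = k % (m + 1) + 1 := by
        rw [e1, Nat.mod_eq_of_lt (by omega)]
      have h2 := hchain ⟨k % (m + 1), hlt⟩
      have hc1 : (⟨k % (m + 1), Nat.mod_lt _ hNpos⟩ : Fin (m + 1))
          = Fin.castSucc ⟨k % (m + 1), hlt⟩ := Fin.ext rfl
      have hc2 : (⟨(k + 1) % (m + 1), Nat.mod_lt _ hNpos⟩ : Fin (m + 1))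
          = Fin.succ ⟨k % (m + 1), hlt⟩ := Fin.ext (by simp [h1])
      show (es _).2 = (es _).1
      rw [hc1, hc2]
      exact h2
    · have hkm : k % (m + 1) = m :=
        le_antisymm (Nat.lt_succ_iff.mp (Nat.mod_lt _ hNpos)) hge
      have h1 : (k + 1) % (m + 1) = 0 := by rw [e1, hkm, Nat.mod_self]
      have hc1 : (⟨k % (m + 1), Nat.mod_lt _ hNpos⟩ : Fin (m + 1)) = Fin.last m :=
        Fin.ext (by simp [hkm])
      have hc2 : (⟨(k + 1) % (m + 1), Nat.mod_lt _ hNpos⟩ : Fin (m + 1)) = 0 :=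
        Fin.ext (by simp [h1])
      show (es _).2 = (es _).1
      rw [hc1, hc2]
      exact hwrap
  -- multiplicities
  set μ : V × V → ℕ := fun e => ((range (m + 1)).filter (fun k => f k = e)).card with hμ
  have hcount : ∀ v : V,
      (∑ e ∈ D.filter (fun e => e.2 = v), μ e)
        = ∑ e ∈ D.filter (fun e => e.1 = v), μ e := by
    intro v
    have key : ∀ (p : V × V → Prop) (_ : DecidablePred p),
        (∑ e ∈ D.filter p, μ e) = ((range (m + 1)).filter (fun k => p (f k))).card := by
      intro p _
      rw [Finset.card_eq_sum_card_fiberwise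
        (f := f) (t := D.filter p) (fun k hk => by
          simp only [mem_coe, mem_filter, mem_range] at hk ⊢; exact ⟨hfD k, hk.2⟩)]
      refine Finset.sum_congr rfl (fun e he => ?_)
      simp only [mem_filter] at he
      show ((range (m + 1)).filter (fun k => f k = e)).card = _
      congr 1
      rw [Finset.filter_filter]
      refine Finset.filter_congr (fun k _ => ?_)
      constructor
      · rintro h2; exact ⟨by rw [h2]; exact he.2, h2⟩
      · rintro ⟨-, h2⟩; exact h2
    refine (key (fun e => e.2 = v) inferInstance).trans
      (Eq.trans ?_ (key (fun e => e.1 = v) inferInstance).symm)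
    refine Finset.card_bij' (fun k _ => (k + 1) % (m + 1)) (fun k _ => (k + m) % (m + 1))
      ?_ ?_ ?_ ?_
    · intro k hk
      simp only [mem_filter, mem_range] at hk ⊢
      refine ⟨Nat.mod_lt _ hNpos, ?_⟩
      rw [hfmod, ← hstep k]; exact hk.2
    · intro k hk
      simp only [mem_filter, mem_range] at hk ⊢
      refine ⟨Nat.mod_lt _ hNpos, ?_⟩
      have h2 : (k + m + 1) % (m + 1) = k := by
        have h3 : k + m + 1 = k + (m + 1) := by omega
        rw [h3, Nat.add_mod_right, Nat.mod_eq_of_lt hk.1]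
      rw [hfmod, hstep (k + m), ← hfmod (k + m + 1), h2]
      exact hk.2
    · intro k hk
      simp only [mem_filter, mem_range] at hk
      show ((k + 1) % (m + 1) + m) % (m + 1) = k
      rw [Nat.mod_add_mod]
      have h3 : k + 1 + m = k + (m + 1) := by omega
      rw [h3, Nat.add_mod_right, Nat.mod_eq_of_lt hk.1]
    · intro k hk
      simp only [mem_filter, mem_range] at hk
      show ((k + m) % (m + 1) + 1) % (m + 1) = k
      rw [Nat.mod_add_mod]
      have h3 : k + m + 1 = k + (m + 1) := by omega
      rw [h3, Nat.add_mod_right, Nat.mod_eq_of_lt hk.1]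
  -- cycle arc set and minimal arc
  set S : Finset (V × V) := (range (m + 1)).image f with hS
  have hSD : ∀ e ∈ S, e ∈ D := by
    intro e he
    obtain ⟨k, -, rfl⟩ := mem_image.mp he
    exact hfD k
  have hSt : ∀ e ∈ S, 0 < t e := by
    intro e he
    obtain ⟨k, -, rfl⟩ := mem_image.mp he
    exact hft k
  have hSμ : ∀ e ∈ S, 0 < μ e := by
    intro e he
    obtain ⟨k, hk, rfl⟩ := mem_image.mp he
    exact card_pos.mpr ⟨k, mem_filter.mpr ⟨hk, rfl⟩⟩
  have hμ0 : ∀ e, e ∉ S → μ e = 0 := by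
    intro e he
    refine card_eq_zero.mpr (filter_eq_empty_iff.mpr (fun k hk h2 => he ?_))
    exact mem_image.mpr ⟨k, hk, h2⟩
  have hSne : S.Nonempty := ⟨f 0, mem_image.mpr ⟨0, mem_range.mpr hNpos, rfl⟩⟩
  obtain ⟨e₀, he₀S, he₀min⟩ := S.exists_min_image (fun e => c e * t e / (μ e : ℝ)) hSne
  set δ : ℝ := c e₀ * t e₀ / (μ e₀ : ℝ) with hδ
  have hμe₀ : (0 : ℝ) < (μ e₀ : ℝ) := by exact_mod_cast hSμ _ he₀S
  have hδpos : 0 < δ :=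
    div_pos (mul_pos (hc _ (hSD _ he₀S)) (hSt _ he₀S)) hμe₀
  set t'' : V × V → ℝ := fun e => t e - δ * (μ e : ℝ) / c e with ht''
  have hsub : ∀ e ∈ D, c e * t'' e = c e * t e - δ * (μ e : ℝ) := by
    intro e he
    have hce := (hc e he).ne'
    simp only [ht'']
    field_simp
  have hle : ∀ e ∈ D, t'' e ≤ t e := by
    intro e he
    have h0 : 0 ≤ δ * (μ e : ℝ) / c e :=
      div_nonneg (mul_nonneg hδpos.le (Nat.cast_nonneg _)) (hc e he).le
    simp only [ht'']; linarith
  have hnn : ∀ e ∈ D, 0 ≤ t'' e := by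
    intro e he
    by_cases heS : e ∈ S
    · have hμe : (0 : ℝ) < (μ e : ℝ) := by exact_mod_cast hSμ e heS
      have hce := hc e he
      have h1 : δ ≤ c e * t e / (μ e : ℝ) := he₀min e heS
      have h2 : δ * (μ e : ℝ) ≤ c e * t e := (le_div_iff₀ hμe).mp h1
      have h3 : δ * (μ e : ℝ) / c e ≤ t e := by
        rw [div_le_iff₀ hce, mul_comm (t e) (c e)]
        linarith [mul_comm (c e) (t e)]
      simp only [ht'']; linarith
    · simp only [ht'', hμ0 e heS, Nat.cast_zero, mul_zero, zero_div, sub_zero]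
      exact ht e he
  have he₀zero : t'' e₀ = 0 := by
    have hce := (hc e₀ (hSD _ he₀S)).ne'
    simp only [ht'', hδ]
    field_simp
    ring
  refine ⟨t'', fun e he => ⟨hnn e he, hle e he⟩, ?_, ?_⟩
  · intro v
    unfold netFlow
    rw [Finset.sum_congr rfl (fun e he => hsub e (mem_filter.mp he).1),
        Finset.sum_congr rfl (fun e he => hsub e (mem_filter.mp he).1),
        Finset.sum_sub_distrib, Finset.sum_sub_distrib]
    have hc1 : (∑ e ∈ D.filter (fun e => e.2 = v), δ * (μ e : ℝ))
        = ∑ e ∈ D.filter (fun e => e.1 = v), δ * (μ e : ℝ) := by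
      rw [← Finset.mul_sum, ← Finset.mul_sum]
      congr 1
      have := hcount v
      push_cast [← Nat.cast_sum]
      exact_mod_cast this
    linarith [hc1]
  · have hsubset : (D.filter fun e => 0 < t'' e) ⊆ (D.filter fun e => 0 < t e) := by
      intro e he
      simp only [mem_filter] at he ⊢
      exact ⟨he.1, lt_of_lt_of_le he.2 (hle e he.1)⟩
    refine Finset.card_lt_card ((Finset.ssubset_iff_of_subset hsubset).mpr ?_)
    refine ⟨e₀, mem_filter.mpr ⟨hSD _ he₀S, hSt _ he₀S⟩, ?_⟩
    simp only [mem_filter, he₀zero]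
    exact fun h => lt_irrefl _ h.2



/-- cycle elimination, used in the proof of Lemma 3: in a
finite directed network without self-loops, with positive capacities `c` and
nonnegative link times `t`, there is a link-time assignment `t'` with
`0 ≤ t'_e ≤ t_e` producing the same capacity-weighted net inflow at every
vertex, whose support contains no directed cycle. -/
theorem acyclic_support_flow {V : Type*} [Fintype V] [DecidableEq V]
    (D : Finset (V × V)) (hD : ∀ e ∈ D, e.1 ≠ e.2)
    (c : V × V → ℝ) (hc : ∀ e ∈ D, 0 < c e)
    (t : V × V → ℝ) (ht : ∀ e ∈ D, 0 ≤ t e) :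
    ∃ t' : V × V → ℝ,
      (∀ e ∈ D, 0 ≤ t' e ∧ t' e ≤ t e) ∧
      (∀ v : V,
        ∑ e ∈ D.filter (fun e => e.2 = v), c e * t' e -
            ∑ e ∈ D.filter (fun e => e.1 = v), c e * t' e =
          ∑ e ∈ D.filter (fun e => e.2 = v), c e * t e -
            ∑ e ∈ D.filter (fun e => e.1 = v), c e * t e) ∧
      ¬ ∃ (m : ℕ) (es : Fin (m + 1) → V × V),
          (∀ i, es i ∈ D ∧ 0 < t' (es i)) ∧
          (∀ i : Fin m, (es i.castSucc).2 = (es i.succ).1) ∧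
          (es (Fin.last m)).2 = (es 0).1 := by
  suffices h : ∀ n (t : V × V → ℝ), (∀ e ∈ D, 0 ≤ t e) →
      (D.filter fun e => 0 < t e).card ≤ n →
      ∃ t', (∀ e ∈ D, 0 ≤ t' e ∧ t' e ≤ t e) ∧
        (∀ v, netFlow D c t' v = netFlow D c t v) ∧ ¬ HasCyc D t' by
    obtain ⟨t', h1, h2, h3⟩ := h _ t ht le_rfl
    exact ⟨t', h1, fun v => h2 v, h3⟩
  intro n
  induction n with
  | zero =>
    intro t ht hcard
    refine ⟨t, fun e he => ⟨ht e he, le_rfl⟩, fun v => rfl, ?_⟩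
    rintro ⟨m, es, hmem, -, -⟩
    have h1 : es 0 ∈ D.filter (fun e => 0 < t e) :=
      mem_filter.mpr ⟨(hmem 0).1, (hmem 0).2⟩
    have := card_pos.mpr ⟨_, h1⟩
    omega
  | succ n ih =>
    intro t ht hcard
    by_cases hcyc : HasCyc D t
    · obtain ⟨t'', h1, h2, h3⟩ := cyc_step D c hc t ht hcyc
      obtain ⟨t', g1, g2, g3⟩ := ih t'' (fun e he => (h1 e he).1) (by omega)
      exact ⟨t', fun e he => ⟨(g1 e he).1, (g1 e he).2.trans (h1 e he).2⟩,
        fun v => (g2 v).trans (h2 v), g3⟩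
    · exact ⟨t, fun e he => ⟨ht e he, le_rfl⟩, fun v => rfl, hcyc⟩
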